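/- Let p : ℝ → ℝ be continuous, let a, ρ : [t₀, T] → ℝ be continuously differentiable with a(t) > 0, a(t₀) = 1, ρ(t₀) = ρ₀ > 0, ρ(t) > 0 and s + p(s) > 0 for every s in the range of ρ, and suppose ρ'(t) = −3·(a'(t)/a(t))·(ρ(t) + p(ρ(t))) for all t. Define the enthalpy W(t) = exp( (1/3) ∫_{ρ₀}^{ρ(t)} ds / (s + p(s)) ). Let r_b > 0. If ρ(t) < (3 / r_b²) · W(t)² for all t ∈ [t₀, T], then for every t ∈ [t₀, T] and every r with 0 < r ≤ r_b one has r² · ρ(t) · a(t)² / 3 < 1; that is, no shell of the collapsing cloud is ever trapped. -/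

import Mathlib

open Real intervalIntegral

/-- If the density of a homogeneous collapsing perfect fluid is strictly bounded
    by (3/r_b²)·W² where W is the matter enthalpy, then no shell r ≤ r_b is
    ever trapped: r²·ρ·a²/3 < 1. -/
theorem no_trapping_from_enthalpy_bound
    (p : ℝ → ℝ) (hp : Continuous p)
    (t₀ T : ℝ) (hT : t₀ ≤ T)
    (a ρ a' ρ' : ℝ → ℝ)
    (ha : ∀ t ∈ Set.Icc t₀ T, HasDerivAt a (a' t) t)
    (hρ : ∀ t ∈ Set.Icc t₀ T, HasDerivAt ρ (ρ' t) t)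
    (ha' : ContinuousOn a' (Set.Icc t₀ T))
    (hρ' : ContinuousOn ρ' (Set.Icc t₀ T))
    (hapos : ∀ t ∈ Set.Icc t₀ T, 0 < a t)
    (ρ₀ : ℝ) (ha0 : a t₀ = 1) (hρ0 : ρ t₀ = ρ₀) (hρ0pos : 0 < ρ₀)
    (hρpos : ∀ t ∈ Set.Icc t₀ T, 0 < ρ t)
    (hpos : ∀ t ∈ Set.Icc t₀ T, 0 < ρ t + p (ρ t))
    (hcont : ∀ t ∈ Set.Icc t₀ T,
      ρ' t = -3 * (a' t / a t) * (ρ t + p (ρ t)))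
    (r_b : ℝ) (hrb : 0 < r_b)
    (W : ℝ → ℝ)
    (hW : ∀ t ∈ Set.Icc t₀ T,
      W t = Real.exp ((1/3) * ∫ s in ρ₀..(ρ t), 1 / (s + p s)))
    (hbound : ∀ t ∈ Set.Icc t₀ T, ρ t < 3 / r_b ^ 2 * (W t) ^ 2) :
    ∀ t ∈ Set.Icc t₀ T, ∀ r : ℝ, 0 < r → r ≤ r_b →
      r ^ 2 * ρ t * (a t) ^ 2 / 3 < 1 := by
  set f : ℝ → ℝ := fun s => 1 / (s + p s) with hf
  set U : Set ℝ := {s | s + p s ≠ 0} with hU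
  have hUopen : IsOpen U := isOpen_ne.preimage (continuous_id.add hp)
  have hfU : ContinuousOn f U :=
    continuousOn_const.div (continuous_id.add hp).continuousOn (fun x hx => hx)
  have hρcont : ContinuousOn ρ (Set.Icc t₀ T) := fun t ht =>
    (hρ t ht).continuousAt.continuousWithinAt
  have himg : ρ '' Set.Icc t₀ T ⊆ U := by
    rintro s ⟨t, ht, rfl⟩
    exact ne_of_gt (hpos t ht)
  have hoc : (ρ '' Set.Icc t₀ T).OrdConnected :=
    (isPreconnected_Icc.image ρ hρcont).ordConnected
  have ht₀ : t₀ ∈ Set.Icc t₀ T := Set.left_mem_Icc.mpr hT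
  -- for each t in Icc, the function F u = (1/3)∫_{ρ₀}^{ρ u} f + log (a u) has deriv 0
  set F : ℝ → ℝ := fun u => (1/3) * (∫ s in ρ₀..(ρ u), f s) + Real.log (a u) with hF
  have hFderiv : ∀ t ∈ Set.Icc t₀ T, HasDerivAt F 0 t := by
    intro t ht
    have hsub : Set.uIcc ρ₀ (ρ t) ⊆ ρ '' Set.Icc t₀ T := by
      apply hoc.uIcc_subset
      · exact ⟨t₀, ht₀, hρ0⟩
      · exact ⟨t, ht, rfl⟩
    have hmem : ρ t ∈ U := himg ⟨t, ht, rfl⟩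
    have hint : IntervalIntegrable f MeasureTheory.volume ρ₀ (ρ t) :=
      (hfU.mono (hsub.trans himg)).intervalIntegrable
    have h1 : HasDerivAt (fun u => ∫ s in ρ₀..u, f s) (f (ρ t)) (ρ t) :=
      intervalIntegral.integral_hasDerivAt_right hint
        (hfU.stronglyMeasurableAtFilter hUopen (ρ t) hmem)
        (hfU.continuousAt (hUopen.mem_nhds hmem))
    have h2 : HasDerivAt (fun u => ∫ s in ρ₀..(ρ u), f s) (f (ρ t) * ρ' t) t :=
      h1.comp t (hρ t ht)
    have h3 : HasDerivAt (fun u => Real.log (a u)) ((a t)⁻¹ * a' t) t :=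
      (Real.hasDerivAt_log (ne_of_gt (hapos t ht))).comp t (ha t ht)
    have h4 := ((h2.const_mul (1/3 : ℝ)).add h3)
    have heq : (1/3 : ℝ) * (f (ρ t) * ρ' t) + (a t)⁻¹ * a' t = 0 := by
      rw [hcont t ht]
      have hX := ne_of_gt (hpos t ht)
      have hA := ne_of_gt (hapos t ht)
      simp only [hf]
      field_simp
      ring
    rw [heq] at h4
    exact h4
  have hFconst : ∀ t ∈ Set.Icc t₀ T, F t = F t₀ := by
    intro t ht
    have hIcc : Set.uIcc t₀ t ⊆ Set.Icc t₀ T := by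
      rw [Set.uIcc_of_le ht.1]
      exact Set.Icc_subset_Icc le_rfl ht.2
    have := intervalIntegral.integral_eq_sub_of_hasDerivAt
      (f := F) (f' := fun _ => (0 : ℝ))
      (fun x hx => hFderiv x (hIcc hx))
      (intervalIntegrable_const)
    simp at this
    linarith
  have hF0 : F t₀ = 0 := by
    simp [hF, hρ0, ha0]
  intro t ht r hr hrrb
  have hWt : W t = (a t)⁻¹ := by
    have h1 : (1/3 : ℝ) * (∫ s in ρ₀..(ρ t), f s) = -Real.log (a t) := by
      have := hFconst t ht
      rw [hF0] at this
      simp only [hF] at this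
      linarith
    rw [hW t ht]
    simp only [hf] at h1
    rw [h1, Real.exp_neg, Real.exp_log (hapos t ht)]
  have hbt := hbound t ht
  rw [hWt] at hbt
  have hA := hapos t ht
  have hr2 : r ^ 2 ≤ r_b ^ 2 := by nlinarith
  have hρt := hρpos t ht
  have key : ρ t * (a t) ^ 2 < 3 / r_b ^ 2 := by
    have : (a t)⁻¹ ^ 2 = ((a t) ^ 2)⁻¹ := by rw [inv_pow]
    rw [this] at hbt
    have ha2 : (0:ℝ) < (a t) ^ 2 := by positivity
    calc ρ t * (a t)^2 < 3 / r_b ^ 2 * ((a t)^2)⁻¹ * (a t)^2 := by nlinarith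
    _ = 3 / r_b ^ 2 := by field_simp
  have hrb2 : (0:ℝ) < r_b ^ 2 := by positivity
  have ha2 : (0:ℝ) < (a t) ^ 2 := by positivity
  have step : r ^ 2 * ρ t * (a t) ^ 2 ≤ r_b ^ 2 * (ρ t * (a t)^2) := by
    nlinarith [mul_le_mul_of_nonneg_right hr2 (le_of_lt (mul_pos hρt ha2))]
  calc r ^ 2 * ρ t * (a t) ^ 2 / 3 ≤ r_b ^ 2 * (ρ t * (a t)^2) / 3 := by linarith
  _ < r_b ^ 2 * (3 / r_b ^ 2) / 3 := by nlinarith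
  _ = 1 := by field_simp
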